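/- In the Tetrahedron algebra ⊠, for mutually distinct h, i, j in {0,1,2,3}, there is a Lie algebra homomorphism from sl2 (presented with basis X,Y,Z and brackets [X,Y]=2X+2Y, [Y,Z]=2Y+2Z, [Z,X]=2Z+2X) to ⊠ sending X to X_{hi}, Y to X_{ij}, Z to X_{jh}. -/
import Mathlib


namespace TetPaper
variable {K : Type*} [Field K]

/-- Auxiliary bracket for `sl2` in the `X,Y,Z` coordinates, where
`[X,Y] = 2X+2Y`, `[Y,Z] = 2Y+2Z`, `[Z,X] = 2Z+2X`. -/
def sl2xb (u v : Fin 3 → K) : Fin 3 → K :=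
  ![2*(u 0 * v 1 - u 1 * v 0) + 2*(u 2 * v 0 - u 0 * v 2),
    2*(u 0 * v 1 - u 1 * v 0) + 2*(u 1 * v 2 - u 2 * v 1),
    2*(u 2 * v 0 - u 0 * v 2) + 2*(u 1 * v 2 - u 2 * v 1)]

lemma sl2xb_add_lie (x y z : Fin 3 → K) : sl2xb (x + y) z = sl2xb x z + sl2xb y z := by
  funext i; fin_cases i <;> simp [sl2xb] <;> ring

lemma sl2xb_lie_add (x y z : Fin 3 → K) : sl2xb x (y + z) = sl2xb x y + sl2xb x z := by
  funext i; fin_cases i <;> simp [sl2xb] <;> ring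

lemma sl2xb_lie_self (x : Fin 3 → K) : sl2xb x x = 0 := by
  funext i; fin_cases i <;> simp [sl2xb, -mul_eq_zero] <;> ring

lemma sl2xb_leibniz (x y z : Fin 3 → K) :
    sl2xb x (sl2xb y z) = sl2xb (sl2xb x y) z + sl2xb y (sl2xb x z) := by
  funext i; fin_cases i <;> simp [sl2xb] <;> ring

lemma sl2xb_smul (t : K) (x y : Fin 3 → K) : sl2xb x (t • y) = t • sl2xb x y := by
  funext i; fin_cases i <;> simp [sl2xb] <;> ring

end TetPaper

/-- The Lie algebra over `K` with basis `X, Y, Z` and brackets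
`[X,Y] = 2X+2Y`, `[Y,Z] = 2Y+2Z`, `[Z,X] = 2Z+2X`. -/
def Sl2X (K : Type*) := Fin 3 → K

noncomputable instance {K : Type*} [Field K] : AddCommGroup (Sl2X K) :=
  inferInstanceAs (AddCommGroup (Fin 3 → K))

noncomputable instance {K : Type*} [Field K] : Module K (Sl2X K) :=
  inferInstanceAs (Module K (Fin 3 → K))

noncomputable instance {K : Type*} [Field K] : LieRing (Sl2X K) where
  bracket u v := TetPaper.sl2xb u v
  add_lie x y z := TetPaper.sl2xb_add_lie x y z
  lie_add x y z := TetPaper.sl2xb_lie_add x y z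
  lie_self x := TetPaper.sl2xb_lie_self x
  leibniz_lie x y z := TetPaper.sl2xb_leibniz x y z

noncomputable instance {K : Type*} [Field K] : LieAlgebra K (Sl2X K) where
  lie_smul t x y := TetPaper.sl2xb_smul t x y

namespace Sl2X
variable (K : Type*) [Field K]
/-- The basis vector `X`. -/
noncomputable def Xv : Sl2X K := (![1,0,0] : Fin 3 → K)
/-- The basis vector `Y`. -/
noncomputable def Yv : Sl2X K := (![0,1,0] : Fin 3 → K)
/-- The basis vector `Z`. -/
noncomputable def Zv : Sl2X K := (![0,0,1] : Fin 3 → K)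
end Sl2X

/-- The index set of the generators `X_{ij}` of the Tetrahedron algebra. -/
def TetGen : Type := {p : Fin 4 × Fin 4 // p.1 ≠ p.2}

/-- The generator `X_{ij}` inside the free Lie algebra. -/
noncomputable def XF (K : Type*) [Field K] (i j : Fin 4) (h : i ≠ j) :
    FreeLieAlgebra K TetGen :=
  FreeLieAlgebra.of K ⟨(i, j), h⟩

/-- The defining relations of the Tetrahedron algebra, as elements of the free Lie
algebra: `X_{ij} + X_{ji}`, `[X_{hi}, X_{ij}] - 2X_{hi} - 2X_{ij}` for mutually
distinct `h,i,j`, and `[X_{hi},[X_{hi},[X_{hi},X_{jk}]]] - 4[X_{hi},X_{jk}]` for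
mutually distinct `h,i,j,k`. -/
noncomputable def TetRel (K : Type*) [Field K] : Set (FreeLieAlgebra K TetGen) :=
  {x | ∃ i j, ∃ h : i ≠ j, x = XF K i j h + XF K j i h.symm} ∪
  {x | ∃ h i j, ∃ h1 : h ≠ i, ∃ h2 : i ≠ j, h ≠ j ∧
      x = ⁅XF K h i h1, XF K i j h2⁆ - (2:K) • XF K h i h1 - (2:K) • XF K i j h2} ∪
  {x | ∃ h i j k, ∃ h1 : h ≠ i, ∃ h2 : j ≠ k, h ≠ j ∧ h ≠ k ∧ i ≠ j ∧ i ≠ k ∧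
      x = ⁅XF K h i h1, ⁅XF K h i h1, ⁅XF K h i h1, XF K j k h2⁆⁆⁆
            - (4:K) • ⁅XF K h i h1, XF K j k h2⁆}

/-- The Lie ideal generated by the Tetrahedron relations. -/
noncomputable def TetIdeal (K : Type*) [Field K] :
    LieIdeal K (FreeLieAlgebra K TetGen) :=
  LieSubmodule.lieSpan K _ (TetRel K)

/-- The Tetrahedron algebra `⊠`: the quotient of the free Lie algebra on the
generators `X_{ij}` by the ideal generated by the defining relations. -/
noncomputable abbrev Tet (K : Type*) [Field K] :=
  FreeLieAlgebra K TetGen ⧸ TetIdeal K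

/-- The generator `X_{ij}` of the Tetrahedron algebra. -/
noncomputable def XT (K : Type*) [Field K] (i j : Fin 4) (h : i ≠ j) : Tet K :=
  LieSubmodule.Quotient.mk (N := TetIdeal K) (XF K i j h)


lemma tet_rel (K : Type*) [Field K] (a b c : Fin 4) (h1 : a ≠ b) (h2 : b ≠ c) (h3 : a ≠ c) :
    ⁅XT K a b h1, XT K b c h2⁆ = (2:K) • XT K a b h1 + (2:K) • XT K b c h2 := by
  have hmem : (⁅XF K a b h1, XF K b c h2⁆ - (2:K) • XF K a b h1 - (2:K) • XF K b c h2)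
      ∈ TetIdeal K :=
    LieSubmodule.subset_lieSpan (Or.inl (Or.inr ⟨a, b, c, h1, h2, h3, rfl⟩))
  have h0 : LieSubmodule.Quotient.mk (N := TetIdeal K)
      (⁅XF K a b h1, XF K b c h2⁆ - (2:K) • XF K a b h1 - (2:K) • XF K b c h2) = 0 :=
    (LieSubmodule.Quotient.mk_eq_zero' (N := TetIdeal K)).mpr hmem
  have key : ⁅XT K a b h1, XT K b c h2⁆ - (2:K) • XT K a b h1 - (2:K) • XT K b c h2
      = LieSubmodule.Quotient.mk (N := TetIdeal K)
        (⁅XF K a b h1, XF K b c h2⁆ - (2:K) • XF K a b h1 - (2:K) • XF K b c h2) := by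
    rw [XT, XT, ← LieSubmodule.Quotient.mk_bracket, ← Submodule.Quotient.mk_smul,
      ← Submodule.Quotient.mk_smul, ← Submodule.Quotient.mk_sub, ← Submodule.Quotient.mk_sub]
  rw [← key, sub_sub, sub_eq_zero] at h0
  exact h0

/-- for mutually distinct `h, i, j`, there is a Lie algebra
homomorphism from `sl2` (in the `X,Y,Z` presentation) to the Tetrahedron algebra
sending `X ↦ X_{hi}`, `Y ↦ X_{ij}`, `Z ↦ X_{jh}`. -/
theorem stmt16 (K : Type*) [Field K] [CharZero K]
    (h i j : Fin 4) (hhi : h ≠ i) (hij : i ≠ j) (hjh : j ≠ h) :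
    ∃ φ : Sl2X K →ₗ⁅K⁆ Tet K,
      φ (Sl2X.Xv K) = XT K h i hhi ∧
      φ (Sl2X.Yv K) = XT K i j hij ∧
      φ (Sl2X.Zv K) = XT K j h hjh := by
  have hadd : ∀ (u v : Sl2X K) (k : Fin 3), (u + v) k = u k + v k := fun _ _ _ => rfl
  have hsmul : ∀ (t : K) (u : Sl2X K) (k : Fin 3), (t • u) k = t * u k := fun _ _ _ => rfl
  set A := XT K h i hhi
  set B := XT K i j hij
  set C := XT K j h hjh
  have rAB : ⁅A, B⁆ = (2:K) • A + (2:K) • B := tet_rel K h i j hhi hij (Ne.symm hjh)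
  have rBC : ⁅B, C⁆ = (2:K) • B + (2:K) • C := tet_rel K i j h hij hjh (Ne.symm hhi)
  have rCA : ⁅C, A⁆ = (2:K) • C + (2:K) • A := tet_rel K j h i hjh hhi (Ne.symm hij)
  have rBA : ⁅B, A⁆ = -((2:K) • A + (2:K) • B) := by rw [← lie_skew, rAB]
  have rCB : ⁅C, B⁆ = -((2:K) • B + (2:K) • C) := by rw [← lie_skew, rBC]
  have rAC : ⁅A, C⁆ = -((2:K) • C + (2:K) • A) := by rw [← lie_skew, rCA]
  refine ⟨{ toFun := fun u => u 0 • A + u 1 • B + u 2 • C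
            map_add' := fun u v => by simp only [hadd]; module
            map_smul' := fun t u => by simp only [hsmul, RingHom.id_apply]; module
            map_lie' := ?_ }, ?_, ?_, ?_⟩
  · intro u v
    show (TetPaper.sl2xb u v) 0 • A + (TetPaper.sl2xb u v) 1 • B + (TetPaper.sl2xb u v) 2 • C
      = ⁅u 0 • A + u 1 • B + u 2 • C, v 0 • A + v 1 • B + v 2 • C⁆
    simp only [TetPaper.sl2xb, Matrix.cons_val_zero, Matrix.cons_val_one, Matrix.head_cons,
      Matrix.cons_val_two, Matrix.tail_cons, lie_add, add_lie, smul_lie, lie_smul, lie_self,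
      smul_zero, rAB, rBC, rCA, rBA, rCB, rAC]
    module
  · show (1:K) • A + (0:K) • B + (0:K) • C = A
    simp
  · show (0:K) • A + (1:K) • B + (0:K) • C = B
    simp
  · show (0:K) • A + (0:K) • B + (1:K) • C = C
    simp
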